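/- Let p be an odd prime, α a positive integer, and δ a positive divisor of φ(p^α). Then the sum over all units a of ℤ/p^αℤ whose multiplicative order equals δ is congruent to μ(gcd(δ, p-1)) · φ(p^{v_p(δ)}) modulo p^α, where v_p(δ) is the p-adic valuation of δ (the largest k with p^k dividing δ). -/

import Mathlib

open Finset

section Aux

variable {p α : ℕ}

private lemma aux_coprime_p_sub_one (hp : p.Prime) : Nat.Coprime p (p - 1) := by
  have h : Nat.gcd p (p - 1) ∣ p - (p - 1) :=
    Nat.dvd_sub (Nat.gcd_dvd_left _ _) (Nat.gcd_dvd_right _ _)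
  have h1 : p - (p - 1) = 1 := by have := hp.two_le; omega
  rw [h1] at h
  exact Nat.dvd_one.mp h

/-- An element of `ZMod (p^α)` whose residue mod `p` is nonzero is a unit. -/
private lemma aux_isUnit (hp : p.Prime) (hα : 0 < α) {x : ZMod (p ^ α)}
    (hx : ZMod.castHom (dvd_pow_self p hα.ne') (ZMod p) x ≠ 0) : IsUnit x := by
  haveI : NeZero (p ^ α) := ⟨pow_ne_zero α hp.pos.ne'⟩
  haveI : NeZero p := ⟨hp.pos.ne'⟩
  have h1 : ¬ (p ∣ x.val) := by
    intro hdvd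
    apply hx
    rw [ZMod.castHom_apply, ← ZMod.natCast_val, ZMod.natCast_eq_zero_iff]
    exact hdvd
  have h2 : Nat.Coprime x.val (p ^ α) :=
    Nat.Coprime.pow_right α (((Nat.Prime.coprime_iff_not_dvd hp).mpr h1).symm)
  have h3 := (ZMod.isUnit_iff_coprime x.val (p ^ α)).mpr h2
  rwa [ZMod.natCast_rightInverse x] at h3

/-- Lifting-the-exponent consequence. -/
private lemma aux_lte (hp : p.Prime) (hodd : p ≠ 2) {x : ℤ} (hx : (p : ℤ) ∣ x - 1)
    (β m : ℕ) :
    (p : ℤ) ^ m ∣ x ^ p ^ β - 1 ↔ (p : ℤ) ^ m ∣ (x - 1) * (p : ℤ) ^ β := by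
  have hpint : Prime (p : ℤ) := Nat.prime_iff_prime_int.mp hp
  have hpodd : Odd p := hp.odd_of_ne_two hodd
  have hx1 : ¬ (p : ℤ) ∣ x := by
    intro h
    have h2 : (p : ℤ) ∣ x - (x - 1) := dvd_sub h hx
    simp only [sub_sub_cancel] at h2
    exact hpint.not_dvd_one h2
  have hlte := Int.emultiplicity_pow_sub_pow hp hpodd (x := x) (y := 1)
    (by simpa using hx) hx1 (p ^ β)
  rw [one_pow] at hlte
  rw [pow_dvd_iff_le_emultiplicity, pow_dvd_iff_le_emultiplicity, hlte,
    emultiplicity_mul hpint, emultiplicity_pow_self_of_prime hpint,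
    emultiplicity_pow_self_of_prime hp.prime]

open scoped Classical in
/-- The sum of the units killed by `p ^ β` is `p ^ β`. -/
private lemma aux_sum_ppow (hp : p.Prime) (hodd : p ≠ 2) (hα : 0 < α) [NeZero (p ^ α)]
    {β : ℕ} (hβ : β < α) :
    ∑ a ∈ univ.filter (fun a : (ZMod (p ^ α))ˣ => a ^ p ^ β = 1), (a : ZMod (p ^ α))
      = ((p ^ β : ℕ) : ZMod (p ^ α)) := by
  haveI : Fact p.Prime := ⟨hp⟩
  haveI : Fact (1 < p ^ α) := ⟨Nat.one_lt_pow hα.ne' hp.one_lt⟩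
  have hppos : 0 < p ^ (α - β) := pow_pos hp.pos _
  have hcop : ∀ k : ℕ, Nat.Coprime (1 + p ^ (α - β) * k) (p ^ α) := by
    intro k
    apply Nat.Coprime.pow_right
    rw [Nat.coprime_comm, hp.coprime_iff_not_dvd]
    intro hdvd
    have h2 : p ∣ p ^ (α - β) * k := (dvd_pow_self p (by omega : α - β ≠ 0)).mul_right k
    rw [add_comm] at hdvd
    exact hp.ne_one (Nat.dvd_one.mp ((Nat.dvd_add_right h2).mp hdvd))
  have hpow_eq : p ^ (α - β) * p ^ β = p ^ α := by
    rw [← pow_add]; congr 1; omega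
  have hpow_eqZ : (p : ℤ) ^ (α - β) * (p : ℤ) ^ β = (p : ℤ) ^ α := by
    rw [← pow_add]; congr 1; omega
  have hlt : ∀ k, k < p ^ β → 1 + p ^ (α - β) * k < p ^ α := by
    intro k hk
    have h1 : p ^ (α - β) * k + p ^ (α - β) ≤ p ^ (α - β) * p ^ β := by
      calc p ^ (α - β) * k + p ^ (α - β) = p ^ (α - β) * (k + 1) := by ring
      _ ≤ p ^ (α - β) * p ^ β := Nat.mul_le_mul_left _ (by omega)
    have h3 : 2 ≤ p ^ (α - β) := by
      calc 2 ≤ p := hp.two_le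
      _ = p ^ 1 := (pow_one p).symm
      _ ≤ p ^ (α - β) := Nat.pow_le_pow_right hp.pos (by omega)
    omega
  set i : ℕ → (ZMod (p ^ α))ˣ := fun k => ZMod.unitOfCoprime _ (hcop k) with hi_def
  set j : (ZMod (p ^ α))ˣ → ℕ :=
    fun a => ((a : ZMod (p ^ α)).val - 1) / p ^ (α - β) with hj_def
  have hival : ∀ k, ((i k : (ZMod (p ^ α))ˣ) : ZMod (p ^ α))
      = ((1 + p ^ (α - β) * k : ℕ) : ZMod (p ^ α)) := fun k => ZMod.coe_unitOfCoprime _ _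
  -- elements of the filter are ≡ 1 (mod p^(α-β))
  have hmem_dvd : ∀ a : (ZMod (p ^ α))ˣ, a ^ p ^ β = 1 →
      (p : ℤ) ^ (α - β) ∣ (((a : ZMod (p ^ α)).val : ℤ) - 1) := by
    intro a ha
    set v : ℕ := (a : ZMod (p ^ α)).val with hv
    have hvcast : ((v : ℕ) : ZMod (p ^ α)) = (a : ZMod (p ^ α)) := ZMod.natCast_rightInverse _
    have hres : ((v : ℕ) : ZMod p) = 1 := by
      set φ := ZMod.castHom (dvd_pow_self p hα.ne') (ZMod p) with hφdef
      set y : ZMod p := φ (a : ZMod (p ^ α)) with hy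
      have hyv : y = ((v : ℕ) : ZMod p) := by
        rw [hy, ZMod.castHom_apply, ← ZMod.natCast_val]
      have hy0 : y ≠ 0 := ((Units.isUnit a).map φ).ne_zero
      have hy1 : y ^ p ^ β = 1 := by
        rw [hy, ← map_pow, ← Units.val_pow_eq_pow_val, ha, Units.val_one, map_one]
      have hy2 : y ^ (p - 1) = 1 := ZMod.pow_card_sub_one_eq_one hy0
      have hord : orderOf y ∣ Nat.gcd (p ^ β) (p - 1) :=
        Nat.dvd_gcd (orderOf_dvd_of_pow_eq_one hy1) (orderOf_dvd_of_pow_eq_one hy2)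
      have hgcd : Nat.gcd (p ^ β) (p - 1) = 1 :=
        Nat.Coprime.pow_left β (aux_coprime_p_sub_one hp)
      rw [hgcd, Nat.dvd_one, orderOf_eq_one_iff] at hord
      rw [← hyv, hord]
    have hmod : v ≡ 1 [MOD p] := by
      rw [← ZMod.natCast_eq_natCast_iff]
      rw [hres]; simp
    have hp1 : (p : ℤ) ∣ ((v : ℤ) - 1) := by
      have h1 := (Nat.modEq_iff_dvd).mp hmod
      have h2 := dvd_sub_comm.mp h1
      simpa using h2
    have hring : ((v : ℕ) : ZMod (p ^ α)) ^ p ^ β = 1 := by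
      rw [hvcast, ← Units.val_pow_eq_pow_val, ha, Units.val_one]
    have h2 : (v ^ p ^ β : ℕ) ≡ 1 [MOD p ^ α] := by
      rw [← ZMod.natCast_eq_natCast_iff]
      push_cast
      simpa using hring
    have h3 : (p : ℤ) ^ α ∣ ((v : ℤ) ^ p ^ β - 1) := by
      have h4 := dvd_sub_comm.mp ((Nat.modEq_iff_dvd).mp h2)
      push_cast at h4
      exact h4
    have h4 := (aux_lte hp hodd hp1 β α).mp h3
    rw [← hpow_eqZ] at h4
    exact (mul_dvd_mul_iff_right (pow_ne_zero β
      (by exact_mod_cast hp.pos.ne' : (p : ℤ) ≠ 0))).mp h4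
  have hi_mem : ∀ k, (i k) ^ p ^ β = 1 := by
    intro k
    apply Units.ext
    rw [Units.val_pow_eq_pow_val, hival, Units.val_one]
    have hx : (p : ℤ) ∣ (1 + (p : ℤ) ^ (α - β) * (k : ℤ)) - 1 := by
      have heq : (1 + (p : ℤ) ^ (α - β) * (k : ℤ)) - 1 = (p : ℤ) ^ (α - β) * k := by ring
      rw [heq]
      exact ((dvd_pow_self (p : ℤ) (by omega : α - β ≠ 0))).mul_right _
    have h1 : ((1 + p ^ (α - β) * k) ^ p ^ β : ℕ) ≡ 1 [MOD p ^ α] := by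
      rw [Nat.modEq_iff_dvd, dvd_sub_comm]
      push_cast
      rw [aux_lte hp hodd hx β α]
      refine ⟨(k : ℤ), ?_⟩
      rw [← hpow_eqZ]; ring
    have h2 := (ZMod.natCast_eq_natCast_iff _ _ _).mpr h1
    rw [Nat.cast_pow] at h2
    simpa using h2
  have hj_mem : ∀ a : (ZMod (p ^ α))ˣ, j a < p ^ β := by
    intro a
    rw [hj_def]
    simp only
    rw [Nat.div_lt_iff_lt_mul hppos]
    have h1 : (a : ZMod (p ^ α)).val < p ^ α := ZMod.val_lt _
    rw [show p ^ β * p ^ (α - β) = p ^ α from by rw [mul_comm]; exact hpow_eq]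
    omega
  have hright : ∀ a ∈ univ.filter (fun a : (ZMod (p ^ α))ˣ => a ^ p ^ β = 1),
      i (j a) = a := by
    intro a ha
    rw [mem_filter] at ha
    have hZ := hmem_dvd a ha.2
    have hvpos : 1 ≤ (a : ZMod (p ^ α)).val := by
      rcases Nat.eq_zero_or_pos (a : ZMod (p ^ α)).val with h | h
      · exfalso
        have h0 : (a : ZMod (p ^ α)) = 0 := by
          have := ZMod.natCast_rightInverse (n := p ^ α) (a : ZMod (p ^ α))
          rw [h, Nat.cast_zero] at this
          exact this.symm
        exact (Units.ne_zero a) h0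
      · exact h
    have hdvdN : p ^ (α - β) ∣ (a : ZMod (p ^ α)).val - 1 := by
      have h1 : ((p ^ (α - β) : ℕ) : ℤ) ∣ (((a : ZMod (p ^ α)).val - 1 : ℕ) : ℤ) := by
        rw [Nat.cast_sub hvpos]
        push_cast
        exact_mod_cast hZ
      exact_mod_cast h1
    apply Units.ext
    rw [hival, hj_def]
    simp only
    rw [Nat.mul_div_cancel' hdvdN]
    rw [show 1 + ((a : ZMod (p ^ α)).val - 1) = (a : ZMod (p ^ α)).val from by omega]
    exact ZMod.natCast_rightInverse _
  have hleft : ∀ k ∈ range (p ^ β), j (i k) = k := by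
    intro k hk
    rw [mem_range] at hk
    rw [hj_def]
    simp only
    rw [hival, ZMod.val_natCast, Nat.mod_eq_of_lt (hlt k hk), Nat.add_sub_cancel_left]
    exact Nat.mul_div_cancel_left k hppos
  have hbij : ∑ a ∈ univ.filter (fun a : (ZMod (p ^ α))ˣ => a ^ p ^ β = 1),
      (a : ZMod (p ^ α))
      = ∑ k ∈ range (p ^ β), ((1 + p ^ (α - β) * k : ℕ) : ZMod (p ^ α)) := by
    refine Finset.sum_nbij' j i ?_ ?_ ?_ ?_ ?_
    · intro a _; rw [mem_range]; exact hj_mem a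
    · intro k _; rw [mem_filter]; exact ⟨mem_univ _, hi_mem k⟩
    · exact hright
    · exact hleft
    · intro a ha
      rw [← hival (j a), hright a ha]
  rw [hbij]
  have h2 : ∀ k ∈ range (p ^ β), ((1 + p ^ (α - β) * k : ℕ) : ZMod (p ^ α))
      = 1 + ((p ^ (α - β) : ℕ) : ZMod (p ^ α)) * ((k : ℕ) : ZMod (p ^ α)) := by
    intro k _; push_cast; ring
  rw [Finset.sum_congr rfl h2, Finset.sum_add_distrib, Finset.sum_const, ← Finset.mul_sum]
  have h3 : (∑ k ∈ range (p ^ β), ((k : ℕ) : ZMod (p ^ α)))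
      = ((p ^ β * (p ^ β - 1) / 2 : ℕ) : ZMod (p ^ α)) := by
    rw [← Nat.cast_sum, Finset.sum_range_id]
  obtain ⟨w, hw⟩ : 2 ∣ p ^ β - 1 := (Nat.Odd.sub_odd ((hp.odd_of_ne_two hodd).pow) odd_one).two_dvd
  have h5 : p ^ β * (p ^ β - 1) / 2 = p ^ β * w := by
    rw [hw, show p ^ β * (2 * w) = p ^ β * w * 2 from by ring,
      Nat.mul_div_cancel _ (by norm_num)]
  have h6 : ((p ^ (α - β) : ℕ) : ZMod (p ^ α)) * ((p ^ β * w : ℕ) : ZMod (p ^ α)) = 0 := by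
    rw [← Nat.cast_mul, ZMod.natCast_eq_zero_iff]
    exact ⟨w, by rw [← hpow_eq]; ring⟩
  rw [h3, h5, h6, card_range]
  simp [nsmul_eq_mul]

open scoped Classical in
/-- If a prime `q` divides both `e` and `p - 1` then the sum of units killed by `e` is `0`. -/
private lemma aux_sum_zero (hp : p.Prime) (hodd : p ≠ 2) (hα : 0 < α) [NeZero (p ^ α)]
    {e q : ℕ} (hq : q.Prime) (hqe : q ∣ e) (hqp : q ∣ p - 1) :
    ∑ a ∈ univ.filter (fun a : (ZMod (p ^ α))ˣ => a ^ e = 1), (a : ZMod (p ^ α)) = 0 := by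
  haveI : Fact p.Prime := ⟨hp⟩
  haveI : Fact q.Prime := ⟨hq⟩
  haveI : Fact (1 < p ^ α) := ⟨Nat.one_lt_pow hα.ne' hp.one_lt⟩
  have hp1pos : 0 < p - 1 := by have := hp.two_le; omega
  have hqcard : q ∣ Fintype.card (ZMod (p ^ α))ˣ := by
    rw [ZMod.card_units_eq_totient, Nat.totient_prime_pow hp hα]
    exact hqp.trans (dvd_mul_left _ _)
  obtain ⟨c, hc⟩ := exists_prime_orderOf_dvd_card q hqcard
  have hce : c ^ e = 1 := orderOf_dvd_iff_pow_eq_one.mp (hc ▸ hqe)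
  have hcne : c ≠ 1 := by
    intro h; rw [h, orderOf_one] at hc; exact hq.ne_one hc.symm
  set φ := ZMod.castHom (dvd_pow_self p hα.ne') (ZMod p) with hφdef
  have hcq : ((c : ZMod (p ^ α))) ^ q = 1 := by
    rw [← Units.val_pow_eq_pow_val, ← hc, pow_orderOf_eq_one, Units.val_one]
  have hunit : IsUnit ((c : ZMod (p ^ α)) - 1) := by
    apply aux_isUnit hp hα
    intro h0
    have hφc : φ (c : ZMod (p ^ α)) = 1 := by
      refine sub_eq_zero.mp ?_
      rw [← map_one φ, ← map_sub]
      exact h0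
    have hSunit : IsUnit (∑ k ∈ range q, (c : ZMod (p ^ α)) ^ k) := by
      apply aux_isUnit hp hα
      have hφS : φ (∑ k ∈ range q, (c : ZMod (p ^ α)) ^ k) = (q : ZMod p) := by
        rw [map_sum]
        simp only [map_pow, hφc, one_pow]
        simp
      rw [hφS, Ne, ZMod.natCast_eq_zero_iff]
      intro hpq
      have h1 : p ≤ q := Nat.le_of_dvd hq.pos hpq
      have h2 : q ≤ p - 1 := Nat.le_of_dvd hp1pos hqp
      omega
    have hSmul : (∑ k ∈ range q, (c : ZMod (p ^ α)) ^ k) * ((c : ZMod (p ^ α)) - 1) = 0 := by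
      rw [geom_sum_mul, hcq, sub_self]
    have hc1 : (c : ZMod (p ^ α)) - 1 = 0 :=
      hSunit.mul_left_cancel (by rw [hSmul, mul_zero])
    exact hcne (Units.ext (by rw [sub_eq_zero] at hc1; simpa using hc1))
  have hinv : (c : ZMod (p ^ α)) *
      (∑ a ∈ univ.filter (fun a : (ZMod (p ^ α))ˣ => a ^ e = 1), (a : ZMod (p ^ α)))
      = ∑ a ∈ univ.filter (fun a : (ZMod (p ^ α))ˣ => a ^ e = 1), (a : ZMod (p ^ α)) := by
    rw [Finset.mul_sum]
    refine Finset.sum_nbij' (fun a => c * a) (fun a => c⁻¹ * a) ?_ ?_ ?_ ?_ ?_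
    · intro a ha
      rw [mem_filter] at ha ⊢
      refine ⟨mem_univ _, ?_⟩
      rw [mul_pow, hce, one_mul, ha.2]
    · intro a ha
      rw [mem_filter] at ha ⊢
      refine ⟨mem_univ _, ?_⟩
      rw [mul_pow, inv_pow, hce, inv_one, one_mul, ha.2]
    · intro a _; simp
    · intro a _; simp
    · intro a _; rw [Units.val_mul]
  have hmul : ((c : ZMod (p ^ α)) - 1) *
      (∑ a ∈ univ.filter (fun a : (ZMod (p ^ α))ˣ => a ^ e = 1), (a : ZMod (p ^ α))) = 0 := by
    rw [sub_mul, one_mul, hinv, sub_self]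
  exact hunit.mul_left_cancel (by rw [hmul, mul_zero])

end Aux

open Finset in
open scoped Classical in
/-- For an odd prime `p`, `α ≥ 1` and `δ` a positive divisor of `φ(p^α)`, the sum of all units
of `ℤ/p^αℤ` of multiplicative order `δ` is `μ(gcd(δ, p-1)) · φ(p^(v_p δ))` in `ZMod (p^α)`. -/
theorem sum_units_orderOf_prime_pow (p α δ : ℕ) (hp : p.Prime) (hodd : p ≠ 2) (hα : 0 < α)
    (hδpos : 0 < δ) (hδ : δ ∣ Nat.totient (p ^ α)) :
    haveI : NeZero (p ^ α) := ⟨pow_ne_zero α hp.pos.ne'⟩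
    ∑ a ∈ univ.filter (fun a : (ZMod (p ^ α))ˣ => orderOf a = δ), (a : ZMod (p ^ α)) =
      ((ArithmeticFunction.moebius (Nat.gcd δ (p - 1)) : ℤ) : ZMod (p ^ α)) *
        ((Nat.totient (p ^ (δ.factorization p)) : ℕ) : ZMod (p ^ α)) := by
  haveI : NeZero (p ^ α) := ⟨pow_ne_zero α hp.pos.ne'⟩
  haveI : Fact p.Prime := ⟨hp⟩
  have htot : Nat.totient (p ^ α) = p ^ (α - 1) * (p - 1) := Nat.totient_prime_pow hp hα
  set F : ℕ → ZMod (p ^ α) :=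
    fun m => ∑ a ∈ univ.filter (fun a : (ZMod (p ^ α))ˣ => a ^ m = 1), (a : ZMod (p ^ α))
    with hF
  set G : ℕ → ZMod (p ^ α) :=
    fun m => ∑ a ∈ univ.filter (fun a : (ZMod (p ^ α))ˣ => orderOf a = m), (a : ZMod (p ^ α))
    with hG
  -- step 1: F m = ∑_{d ∣ m} G d
  have hFG : ∀ m : ℕ, m > 0 → ∑ d ∈ m.divisors, G d = F m := by
    intro m hm
    have hmap : ∀ a ∈ univ.filter (fun a : (ZMod (p ^ α))ˣ => a ^ m = 1),
        orderOf a ∈ m.divisors := by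
      intro a ha
      rw [mem_filter] at ha
      exact Nat.mem_divisors.mpr ⟨orderOf_dvd_of_pow_eq_one ha.2, hm.ne'⟩
    have h1 := Finset.sum_fiberwise_of_maps_to hmap
      (fun a : (ZMod (p ^ α))ˣ => (a : ZMod (p ^ α)))
    rw [hF]
    simp only
    rw [← h1]
    refine Finset.sum_congr rfl fun d hd => ?_
    rw [hG]
    simp only
    refine Finset.sum_congr ?_ fun _ _ => rfl
    ext a
    simp only [mem_filter, mem_univ, true_and]
    constructor
    · intro h
      exact ⟨orderOf_dvd_iff_pow_eq_one.mp (h ▸ (Nat.mem_divisors.mp hd).1), h⟩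
    · rintro ⟨-, h⟩; exact h
  -- step 2: Möbius inversion
  have hinv := (ArithmeticFunction.sum_eq_iff_sum_smul_moebius_eq (f := G) (g := F)).mp
    hFG δ hδpos
  rw [show (∑ a ∈ univ.filter (fun a : (ZMod (p ^ α))ˣ => orderOf a = δ),
      (a : ZMod (p ^ α))) = G δ from rfl, ← hinv,
    Nat.sum_divisorsAntidiagonal' (f := fun x y => ArithmeticFunction.moebius x • F y)]
  -- notation for the p-part of δ
  set β := δ.factorization p with hβdef
  set d₀ := δ / p ^ β with hd₀def
  have hpβδ : p ^ β ∣ δ := Nat.ordProj_dvd δ p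
  have hδeq : p ^ β * d₀ = δ := Nat.ordProj_mul_ordCompl_eq_self δ p
  have hd₀p : ¬ p ∣ d₀ := Nat.not_dvd_ordCompl hp hδpos.ne'
  have hd₀pos : 0 < d₀ := Nat.ordCompl_pos p hδpos.ne'
  have hcop_d₀ : Nat.Coprime d₀ p := ((hp.coprime_iff_not_dvd).mpr hd₀p).symm
  have hd₀dvd : d₀ ∣ p - 1 := by
    have h1 : d₀ ∣ p ^ (α - 1) * (p - 1) := by
      rw [← htot]
      exact (Nat.ordCompl_dvd δ p).trans hδ
    exact (Nat.Coprime.dvd_of_dvd_mul_left (hcop_d₀.pow_right _) h1)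
  have hβα : β < α := by
    have h1 : p ^ β ∣ p ^ (α - 1) * (p - 1) := by
      rw [← htot]; exact hpβδ.trans hδ
    have h2 : Nat.Coprime (p ^ β) (p - 1) :=
      Nat.Coprime.pow_left β (aux_coprime_p_sub_one hp)
    have h3 : p ^ β ∣ p ^ (α - 1) := Nat.Coprime.dvd_of_dvd_mul_right h2 h1
    have h4 : β ≤ α - 1 := (Nat.pow_dvd_pow_iff_le_right hp.one_lt).mp h3
    omega
  -- the possibly-nonzero terms
  have hsub : ({p ^ (β - 1), p ^ β} : Finset ℕ) ⊆ δ.divisors := by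
    intro e he
    rw [mem_insert, mem_singleton] at he
    rw [Nat.mem_divisors]
    rcases he with h | h
    · exact ⟨h ▸ (pow_dvd_pow p (by omega : β - 1 ≤ β)).trans hpβδ, hδpos.ne'⟩
    · exact ⟨h ▸ hpβδ, hδpos.ne'⟩
  have hzero : ∀ e ∈ δ.divisors, e ∉ ({p ^ (β - 1), p ^ β} : Finset ℕ) →
      ArithmeticFunction.moebius (δ / e) • F e = 0 := by
    intro e he hne
    obtain ⟨hedvd, -⟩ := Nat.mem_divisors.mp he
    have hepos : 0 < e := Nat.pos_of_dvd_of_pos hedvd hδpos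
    rw [mem_insert, mem_singleton] at hne
    push_neg at hne
    set γ := e.factorization p with hγdef
    set e₀ := e / p ^ γ with he₀def
    by_cases h0 : e₀ = 1
    · -- e is a power of p with exponent ≤ β - 2 : μ(δ/e) = 0
      have heγ : e = p ^ γ := by
        conv_lhs => rw [← Nat.ordProj_mul_ordCompl_eq_self e p]
        rw [← he₀def, ← hγdef, h0, mul_one]
      have hγβ : γ ≤ β := by
        rw [hβdef]
        exact (Nat.Prime.pow_dvd_iff_le_factorization hp hδpos.ne').mp (heγ ▸ hedvd)
      have hγ1 : γ ≠ β := fun h => hne.2 (by rw [heγ, h])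
      have hγ2 : γ ≠ β - 1 := fun h => hne.1 (by rw [heγ, h])
      have hδe : δ / e = p ^ (β - γ) * d₀ := by
        rw [heγ, ← hδeq, show β = γ + (β - γ) from by omega, pow_add, mul_assoc,
          Nat.mul_div_cancel_left _ (pow_pos hp.pos γ)]
        rw [show γ + (β - γ) - γ = β - γ from by omega]
      have hnsq : ¬ Squarefree (δ / e) := by
        intro hs
        have hdvd2 : p * p ∣ δ / e := by
          rw [hδe]
          refine Dvd.dvd.mul_right ?_ d₀
          have hpp : p * p = p ^ 2 := by ring
          rw [hpp]
          exact pow_dvd_pow p (by omega : 2 ≤ β - γ)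
        exact hp.ne_one (Nat.isUnit_iff.mp (hs p hdvd2))
      rw [ArithmeticFunction.moebius_eq_zero_of_not_squarefree hnsq, zero_smul]
    · -- e has a prime factor dividing p - 1 : F e = 0
      have hq : (e₀.minFac).Prime := Nat.minFac_prime h0
      have hqe : e₀.minFac ∣ e := (Nat.minFac_dvd e₀).trans (Nat.ordCompl_dvd e p)
      have hq1 : e₀.minFac ∣ p - 1 := by
        have he₀p : ¬ p ∣ e₀ := Nat.not_dvd_ordCompl hp hepos.ne'
        have hcop : Nat.Coprime e₀ (p ^ (α - 1)) :=
          Nat.Coprime.pow_right _ (((hp.coprime_iff_not_dvd).mpr he₀p).symm)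
        have h1 : e₀ ∣ p ^ (α - 1) * (p - 1) := by
          rw [← htot]
          exact ((Nat.ordCompl_dvd e p).trans hedvd).trans hδ
        exact (Nat.minFac_dvd e₀).trans (Nat.Coprime.dvd_of_dvd_mul_left hcop h1)
      have hFe : F e = 0 := aux_sum_zero hp hodd hα hq hqe hq1
      rw [hFe, smul_zero]
  rw [← Finset.sum_subset hsub hzero]
  -- now evaluate
  have hgcd : Nat.gcd δ (p - 1) = d₀ := by
    rw [← hδeq,
      Nat.Coprime.gcd_mul_left_cancel d₀ (Nat.Coprime.pow_left β (aux_coprime_p_sub_one hp)),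
      Nat.gcd_eq_left hd₀dvd]
  have hFβ : F (p ^ β) = ((p ^ β : ℕ) : ZMod (p ^ α)) :=
    aux_sum_ppow hp hodd hα hβα
  have hμβ : ArithmeticFunction.moebius (δ / p ^ β) = ArithmeticFunction.moebius d₀ := rfl
  rcases Nat.eq_zero_or_pos β with hβ0 | hβpos
  · -- β = 0, the two candidate terms coincide : they are {1}
    have hpair : ({p ^ (β - 1), p ^ β} : Finset ℕ) = {1} := by
      rw [hβ0]
      norm_num
    rw [hpair, Finset.sum_singleton, Nat.div_one]
    have hF1 := hFβ
    rw [hβ0, pow_zero] at hF1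
    have hδd₀ : d₀ = δ := by rw [hd₀def, hβ0, pow_zero, Nat.div_one]
    rw [hF1, hgcd, hδd₀, hβ0, pow_zero, Nat.totient_one, zsmul_eq_mul]
  · -- β ≥ 1
    obtain ⟨B, hB⟩ : ∃ B, β = B + 1 := ⟨β - 1, by omega⟩
    have hne : p ^ (β - 1) ≠ p ^ β :=
      ne_of_lt (Nat.pow_lt_pow_right hp.one_lt (by omega))
    rw [Finset.sum_pair hne]
    rw [show β - 1 = B from by omega]
    have hFB : F (p ^ B) = ((p ^ B : ℕ) : ZMod (p ^ α)) :=
      aux_sum_ppow hp hodd hα (by omega)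
    have hδB : δ / p ^ B = p * d₀ := by
      rw [← hδeq, hB, pow_succ, show p ^ B * p * d₀ = p ^ B * (p * d₀) from by ring,
        Nat.mul_div_cancel_left _ (pow_pos hp.pos _)]
    have hμ1 : ArithmeticFunction.moebius (δ / p ^ B) =
        - ArithmeticFunction.moebius d₀ := by
      rw [hδB, (ArithmeticFunction.isMultiplicative_moebius).map_mul_of_coprime
        hcop_d₀.symm, ArithmeticFunction.moebius_apply_prime hp]
      ring
    rw [hFβ, hFB, hμβ, hμ1, hgcd]
    have htotβ : Nat.totient (p ^ β) = p ^ B * (p - 1) := by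
      rw [Nat.totient_prime_pow hp hβpos, show β - 1 = B from by omega]
    rw [htotβ, zsmul_eq_mul, zsmul_eq_mul]
    have h1 : (((p - 1 : ℕ)) : ZMod (p ^ α)) = (p : ZMod (p ^ α)) - 1 := by
      rw [Nat.cast_sub hp.one_lt.le, Nat.cast_one]
    have hcast : ((p ^ B * (p - 1) : ℕ) : ZMod (p ^ α))
        = ((p ^ β : ℕ) : ZMod (p ^ α)) - ((p ^ B : ℕ) : ZMod (p ^ α)) := by
      push_cast [h1]
      rw [hB]
      ring
    rw [hcast]
    push_cast
    ring
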